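/- For every 1 ≤ i ≤ n, the product of the first i commuting elements J_1 J_2 ⋯ J_i equals (X T_{n-1} T_{n-2} ⋯ T_i)^i, where X := T_0 T_1 ⋯ T_n and J_k := (T_{k-1}^{-1} ⋯ T_1^{-1})(T_0 T_1 ⋯ T_n)(T_{n-1} ⋯ T_k); in particular J_1 J_2 ⋯ J_n = X^n. -/
import Mathlib


/-- The ordered product `T a * T (a+1) * ⋯ * T b` (equal to `1` when `b < a`). -/
def upProd {G : Type*} [Monoid G] (T : ℕ → G) (a b : ℕ) : G :=
  ((List.range (b + 1 - a)).map fun k => T (a + k)).prod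

/-- The ordered product `T b * T (b-1) * ⋯ * T a` (equal to `1` when `b < a`). -/
def downProd {G : Type*} [Monoid G] (T : ℕ → G) (b a : ℕ) : G :=
  ((List.range (b + 1 - a)).map fun k => T (b - k)).prod

/-- The element `J_k = (T_{k-1}⁻¹ ⋯ T_1⁻¹)(T_0 T_1 ⋯ T_n)(T_{n-1} ⋯ T_k)`. -/
def Jelt {G : Type*} [Group G] (T : ℕ → G) (n k : ℕ) : G :=
  downProd (fun m => (T m)⁻¹) (k - 1) 1 * upProd T 0 n * downProd T (n - 1) k

section Aux

variable {G : Type*}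

section MonoidAux

variable [Monoid G] (T : ℕ → G)

lemma upProd_nil (a b : ℕ) (h : b + 1 ≤ a) : upProd T a b = 1 := by
  have h0 : b + 1 - a = 0 := by omega
  simp [upProd, h0]

lemma upProd_same (a : ℕ) : upProd T a a = T a := by
  have h0 : a + 1 - a = 1 := by omega
  simp [upProd, h0, List.range_succ]

lemma upProd_succ (a b : ℕ) (h : a ≤ b + 1) :
    upProd T a (b + 1) = upProd T a b * T (b + 1) := by
  have h1 : b + 1 + 1 - a = (b + 1 - a) + 1 := by omega
  have h2 : a + (b + 1 - a) = b + 1 := by omega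
  rw [upProd, h1, List.range_succ, List.map_append, List.prod_append]
  simp only [List.map_cons, List.map_nil, List.prod_cons, List.prod_nil, mul_one]
  rw [h2]
  rfl

lemma downProd_nil (a b : ℕ) (h : b + 1 ≤ a) : downProd T b a = 1 := by
  have h0 : b + 1 - a = 0 := by omega
  simp [downProd, h0]

lemma downProd_same (a : ℕ) : downProd T a a = T a := by
  have h0 : a + 1 - a = 1 := by omega
  simp [downProd, h0, List.range_succ]

lemma downProd_low (a b : ℕ) (h : a ≤ b) :
    downProd T b a = downProd T b (a + 1) * T a := by
  have h1 : b + 1 - a = (b + 1 - (a + 1)) + 1 := by omega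
  have h2 : b - (b + 1 - (a + 1)) = a := by omega
  rw [downProd, h1, List.range_succ, List.map_append, List.prod_append]
  simp only [List.map_cons, List.map_nil, List.prod_cons, List.prod_nil, mul_one]
  rw [h2]
  rfl

lemma downProd_high (a b : ℕ) (h : a ≤ b + 1) :
    downProd T (b + 1) a = T (b + 1) * downProd T b a := by
  have h1 : b + 1 + 1 - a = (b + 1 - a) + 1 := by omega
  rw [downProd, h1, List.range_succ_eq_map, List.map_cons, List.prod_cons, List.map_map]
  have hf : ((fun k => T (b + 1 - k)) ∘ Nat.succ) = fun k => T (b - k) := by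
    funext k
    simp [Function.comp, Nat.succ_sub_succ]
  rw [hf]
  rfl

lemma upProd_split (a c b : ℕ) (hac : a ≤ c) (hcb : c ≤ b) :
    upProd T a b = upProd T a c * upProd T (c + 1) b := by
  induction b, hcb using Nat.le_induction with
  | base => rw [upProd_nil T (c + 1) c (by omega), mul_one]
  | succ b hb ih =>
      rw [upProd_succ T a b (by omega), ih, upProd_succ T (c + 1) b (by omega), mul_assoc]

lemma commute_upProd (c : G) (a b : ℕ) (h : ∀ l, a ≤ l → l ≤ b → Commute c (T l)) :
    Commute c (upProd T a b) := by
  apply Commute.list_prod_right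
  intro x hx
  simp only [List.mem_map, List.mem_range] at hx
  obtain ⟨k, hk, rfl⟩ := hx
  exact h _ (by omega) (by omega)

lemma commute_downProd (c : G) (a b : ℕ) (h : ∀ l, a ≤ l → l ≤ b → Commute c (T l)) :
    Commute c (downProd T b a) := by
  apply Commute.list_prod_right
  intro x hx
  simp only [List.mem_map, List.mem_range] at hx
  obtain ⟨k, hk, rfl⟩ := hx
  exact h _ (by omega) (by omega)

lemma semiconj_upProd (Y : G) (a b : ℕ)
    (h : ∀ l, a ≤ l → l ≤ b → SemiconjBy Y (T l) (T (l + 1))) :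
    SemiconjBy Y (upProd T a b) (upProd T (a + 1) (b + 1)) := by
  rcases le_or_gt a b with hab | hab
  · induction b, hab using Nat.le_induction with
    | base =>
        rw [upProd_same, upProd_same]
        exact h a le_rfl le_rfl
    | succ b hb ih =>
        rw [upProd_succ T a b (by omega), upProd_succ T (a + 1) (b + 1) (by omega)]
        exact (ih (fun l h1 h2 => h l h1 (by omega))).mul_right (h (b + 1) (by omega) le_rfl)
  · rw [upProd_nil T a b (by omega), upProd_nil T (a + 1) (b + 1) (by omega)]
    exact SemiconjBy.one_right Y

end MonoidAux

section GroupAux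

variable [Group G] (T : ℕ → G)

lemma inv_upProd (a b : ℕ) (hab : a ≤ b) :
    (upProd T a b)⁻¹ = downProd (fun m => (T m)⁻¹) b a := by
  have aux : ∀ m a : ℕ, (upProd T a (a + m))⁻¹ = downProd (fun x => (T x)⁻¹) (a + m) a := by
    intro m
    induction m with
    | zero => intro a; simp [upProd_same, downProd_same]
    | succ m ih =>
        intro a
        have he : a + (m + 1) = (a + m) + 1 := by omega
        rw [he, upProd_succ T a (a + m) (by omega), mul_inv_rev, ih a,
          downProd_high (fun x => (T x)⁻¹) a (a + m) (by omega)]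
  obtain ⟨m, rfl⟩ : ∃ m, b = a + m := ⟨b - a, by omega⟩
  exact aux m a

variable (n : ℕ)
  (hbraid : ∀ i, 1 ≤ i → i ≤ n - 2 →
      T i * T (i + 1) * T i = T (i + 1) * T i * T (i + 1))
  (hcomm : ∀ i j, i ≤ n → j ≤ n → i + 2 ≤ j → T i * T j = T j * T i)

include hbraid hcomm in
lemma shiftX (q : ℕ) (h3 : q + 3 ≤ n) :
    SemiconjBy (upProd T 0 n) (T (q + 1)) (T (q + 2)) := by
  have hC : SemiconjBy (upProd T (q + 3) n) (T (q + 1)) (T (q + 1)) :=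
    ((commute_upProd T (T (q + 1)) (q + 3) n
      (fun l h1 h2 => hcomm (q + 1) l (by omega) h2 (by omega)))).symm
  have hB : SemiconjBy (T (q + 1) * T (q + 2)) (T (q + 1)) (T (q + 2)) := by
    show T (q + 1) * T (q + 2) * T (q + 1) = T (q + 2) * (T (q + 1) * T (q + 2))
    rw [← mul_assoc]
    exact hbraid (q + 1) (by omega) (by omega)
  have hA : SemiconjBy (upProd T 0 q) (T (q + 2)) (T (q + 2)) :=
    ((commute_upProd T (T (q + 2)) 0 q
      (fun l h1 h2 =>
        (show Commute (T l) (T (q + 2)) from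
          hcomm l (q + 2) (by omega) (by omega) (by omega)).symm))).symm
  have hsplit : upProd T 0 n = upProd T 0 q * (T (q + 1) * T (q + 2)) * upProd T (q + 3) n := by
    rw [upProd_split T 0 (q + 2) n (by omega) (by omega), upProd_succ T 0 (q + 1) (by omega),
      upProd_succ T 0 q (by omega), mul_assoc (upProd T 0 q)]
  rw [hsplit]
  exact (hA.mul_left hB).mul_left hC

include hbraid hcomm in
lemma semiconjY (i p : ℕ) (hp : 1 ≤ p) (hpi : p + 1 ≤ i) (hin : i + 1 ≤ n) :
    SemiconjBy (upProd T 0 n * downProd T (n - 1) (i + 1)) (T p) (T (p + 1)) := by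
  have hD : SemiconjBy (downProd T (n - 1) (i + 1)) (T p) (T p) :=
    ((commute_downProd T (T p) (i + 1) (n - 1)
      (fun l h1 h2 => hcomm p l (by omega) (by omega) (by omega)))).symm
  have hX : SemiconjBy (upProd T 0 n) (T p) (T (p + 1)) := by
    obtain ⟨q, rfl⟩ : ∃ q, p = q + 1 := ⟨p - 1, by omega⟩
    exact shiftX T n hbraid hcomm q (by omega)
  exact hX.mul_left hD

include hbraid hcomm in
lemma powYT (i : ℕ) (hi : 1 ≤ i) (hin : i + 1 ≤ n) :
    ∀ m, 1 ≤ m → m ≤ i →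
      (upProd T 0 n * downProd T (n - 1) (i + 1) * T i) ^ m
        = (upProd T 0 n * downProd T (n - 1) (i + 1)) ^ m * upProd T (i + 1 - m) i := by
  intro m hm
  induction m, hm using Nat.le_induction with
  | base =>
      intro _
      have e : i + 1 - 1 = i := by omega
      rw [pow_one, pow_one, e, upProd_same, mul_assoc]
  | succ m hm ih =>
      intro hmi
      set Y := upProd T 0 n * downProd T (n - 1) (i + 1) with hYdef
      have hsc : SemiconjBy Y (upProd T (i - m) (i - 1)) (upProd T (i - m + 1) (i - 1 + 1)) :=
        semiconj_upProd T Y (i - m) (i - 1)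
          (fun l h1 h2 => semiconjY T n hbraid hcomm i l (by omega) (by omega) hin)
      have e1 : i - m + 1 = i + 1 - m := by omega
      have e2 : i - 1 + 1 = i := by omega
      rw [e1, e2] at hsc
      have e3 : i + 1 - (m + 1) = i - m := by omega
      rw [pow_succ, ih (by omega), e3]
      calc Y ^ m * upProd T (i + 1 - m) i * (Y * T i)
          = Y ^ m * (upProd T (i + 1 - m) i * Y) * T i := by
            simp only [mul_assoc]
        _ = Y ^ m * (Y * upProd T (i - m) (i - 1)) * T i := by
            rw [← hsc.eq]
        _ = Y ^ (m + 1) * (upProd T (i - m) (i - 1) * T i) := by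
            rw [pow_succ]
            simp only [mul_assoc]
        _ = Y ^ (m + 1) * upProd T (i - m) i := by
            have hu : upProd T (i - m) i = upProd T (i - m) (i - 1) * T i := by
              have h' := upProd_succ T (i - m) (i - 1) (by omega)
              rwa [e2] at h'
            rw [hu]

end GroupAux

end Aux

/-- In the affine braid group of type `C⁽¹⁾`, for `1 ≤ i ≤ n` one has
`J_1 J_2 ⋯ J_i = (X T_{n-1} ⋯ T_i)^i` where `X = T_0 T_1 ⋯ T_n`; in particular
`J_1 ⋯ J_n = X^n`. -/
theorem J_partial_products {G : Type*} [Group G] (n : ℕ) (hn : 2 ≤ n) (T : ℕ → G)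
    (hbraid : ∀ i, 1 ≤ i → i ≤ n - 2 →
      T i * T (i + 1) * T i = T (i + 1) * T i * T (i + 1))
    (hcomm : ∀ i j, i ≤ n → j ≤ n → i + 2 ≤ j → T i * T j = T j * T i)
    (hC0 : T 1 * T 0 * T 1 * T 0 = T 0 * T 1 * T 0 * T 1)
    (hCn : T (n - 1) * T n * T (n - 1) * T n = T n * T (n - 1) * T n * T (n - 1)) :
    (∀ i, 1 ≤ i → i ≤ n →
      ((List.range i).map fun m => Jelt T n (m + 1)).prod =
        (upProd T 0 n * downProd T (n - 1) i) ^ i) ∧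
    ((List.range n).map fun m => Jelt T n (m + 1)).prod = (upProd T 0 n) ^ n := by
  have main : ∀ i, 1 ≤ i → i ≤ n →
      ((List.range i).map fun m => Jelt T n (m + 1)).prod =
        (upProd T 0 n * downProd T (n - 1) i) ^ i := by
    intro i hi
    induction i, hi using Nat.le_induction with
    | base =>
        intro _
        have h1 : ((List.range 1).map fun m => Jelt T n (m + 1)).prod = Jelt T n 1 := by
          simp [List.range_succ]
        rw [h1, pow_one, Jelt, show (1 : ℕ) - 1 = 0 from rfl,
          downProd_nil (fun m => (T m)⁻¹) 1 0 (by omega), one_mul]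
    | succ i hi ih =>
        intro hin
        have ihv := ih (by omega)
        rw [List.range_succ, List.map_append, List.prod_append]
        simp only [List.map_cons, List.map_nil, List.prod_cons, List.prod_nil, mul_one]
        rw [ihv]
        have hJ : Jelt T n (i + 1)
            = (upProd T 1 i)⁻¹ * upProd T 0 n * downProd T (n - 1) (i + 1) := by
          have he : i + 1 - 1 = i := by omega
          rw [Jelt, he, ← inv_upProd T 1 i hi]
        rw [hJ]
        have hD : downProd T (n - 1) i = downProd T (n - 1) (i + 1) * T i :=
          downProd_low T i (n - 1) (by omega)
        rw [hD]
        set Y := upProd T 0 n * downProd T (n - 1) (i + 1) with hYdef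
        have hbase : upProd T 0 n * (downProd T (n - 1) (i + 1) * T i) = Y * T i := by
          rw [hYdef, mul_assoc]
        rw [hbase, powYT T n hbraid hcomm i hi hin i hi le_rfl]
        have e : i + 1 - i = 1 := by omega
        rw [e, pow_succ]
        simp only [mul_assoc]
        rw [mul_inv_cancel_left]
  refine ⟨main, ?_⟩
  have h := main n (by omega) le_rfl
  rw [h, downProd_nil T n (n - 1) (by omega), mul_one]
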